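/- arXiv:1304.6744 — 2 statements merged into one kernel-verified Lean document; each statement's English description precedes it below -/
import Mathlib

section
/- Let U_n^σ be the rescaled Chebyshev polynomials of the second kind on [−2√2σ, 2√2σ], U_n^σ(x) = Σ_{k=0}^{⌊n/2⌋} (−1)^k binom(n−k, k) (x/(√2σ))^{n−2k}. Then with respect to the bilinear form ⟨·,·⟩ determined on polynomials by ⟨x^l, x^m⟩ = (√2σ)^{l+m} C_{l,m}, the Chebyshev polynomials are orthogonal: ⟨U_n^σ, U_m^σ⟩ = δ_{nm} γ_n for all n, m ≥ 0. -/
open Finset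
open scoped BigOperators


noncomputable section

/-- `γ_k = (1/π) ∫ (sin x / x)^{k+1} dx`. -/
def γfun (k : ℕ) : ℝ := (1 / Real.pi) * ∫ x : ℝ, (Real.sin x / x) ^ (k + 1)

/-- The coefficients `C_{l,m}` for `l ≤ m`. -/
def CformAux (l m : ℕ) : ℝ :=
  if (l + m) % 2 = 1 then 0
  else if l % 2 = 0 then
    (((l : ℝ) + 1) * ((m : ℝ) + 1))⁻¹ * ∑ k ∈ Finset.range (l / 2 + 1),
      ((2 * (k : ℝ) + 1) ^ 2) * (Nat.choose (l + 1) ((l - 2 * k) / 2) : ℝ) *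
        (Nat.choose (m + 1) ((m - 2 * k) / 2) : ℝ) * γfun (2 * k)
  else
    (((l : ℝ) + 1) * ((m : ℝ) + 1))⁻¹ * ∑ k ∈ Finset.range ((l - 1) / 2 + 1),
      ((2 * (k : ℝ) + 2) ^ 2) * (Nat.choose (l + 1) ((l - 2 * k - 1) / 2) : ℝ) *
        (Nat.choose (m + 1) ((m - 2 * k - 1) / 2) : ℝ) * γfun (2 * k + 1)

/-- The coefficients `C_{l,m}`, extended symmetrically. -/
def Cform (l m : ℕ) : ℝ := if l ≤ m then CformAux l m else CformAux m l

end

noncomputable section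

/-- The bilinear form on polynomials determined by `⟨x^i, x^j⟩ = (√2σ)^{i+j} C_{i,j}`. -/
def polyBil (σ : ℝ) (p q : Polynomial ℝ) : ℝ :=
  p.sum fun i a => q.sum fun j c => a * c * (Real.sqrt 2 * σ) ^ (i + j) * Cform i j

/-- The rescaled Chebyshev polynomial of the second kind on `[-2√2σ, 2√2σ]`:
`U_n^σ(x) = Σ_{k=0}^{⌊n/2⌋} (-1)^k binom(n-k,k) (x/(√2σ))^{n-2k}`. -/
def chebPoly (σ : ℝ) (n : ℕ) : Polynomial ℝ :=
  ∑ k ∈ Finset.range (n / 2 + 1),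
    Polynomial.C ((-1 : ℝ) ^ k * (Nat.choose (n - k) k : ℝ) *
      ((Real.sqrt 2 * σ)⁻¹) ^ (n - 2 * k)) * Polynomial.X ^ (n - 2 * k)

end

section ChebAux
open Polynomial


lemma cheb_sum_choose (n t : ℕ) (h : 2*t ≤ n) :
    ∑ k ∈ range (t+1), (-1:ℤ)^k * (t.choose k) * ((n-k).choose t) = 1 := by
  have e2 : ∑ k ∈ range (t+1), Polynomial.C ((-1:ℤ)^k * (t.choose k)) * (X+1)^(t-k)
      = X^t := by
    have hX : (X : ℤ[X])^t = ((X+1) + (-1))^t := by ring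
    rw [hX, add_pow, ← Finset.sum_range_reflect]
    refine Finset.sum_congr rfl fun k hk => ?_
    rw [mem_range] at hk
    rw [show t + 1 - 1 - k = t - k from by omega,
      Nat.choose_symm (show k ≤ t by omega), show t - (t - k) = k from by omega]
    simp only [map_mul, map_pow, map_neg, map_one, map_natCast]
    ring
  have key : ∑ k ∈ range (t+1), Polynomial.C ((-1:ℤ)^k * (t.choose k)) * (X+1)^(n-k)
      = X^t * (X+1)^(n-t) := by
    have h1 : ∀ k ∈ range (t+1), Polynomial.C ((-1:ℤ)^k * (t.choose k)) * (X+1)^(n-k)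
        = (Polynomial.C ((-1:ℤ)^k * (t.choose k)) * (X+1)^(t-k)) * (X+1)^(n-t) := by
      intro k hk
      rw [mem_range] at hk
      rw [mul_assoc, ← pow_add]
      congr 2
      omega
    rw [Finset.sum_congr rfl h1, ← Finset.sum_mul, e2]
  have hr : (X^t * ((X:ℤ[X])+1)^(n-t)).coeff t = 1 := by
    have h0 := Polynomial.coeff_X_pow_mul (((X:ℤ[X])+1)^(n-t)) t 0
    rw [zero_add] at h0
    rw [h0, coeff_X_add_one_pow, Nat.choose_zero_right, Nat.cast_one]
  have := congrArg (fun p => Polynomial.coeff p t) key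
  simp only [finset_sum_coeff, coeff_C_mul, coeff_X_add_one_pow] at this
  rw [hr] at this
  exact this


lemma cheb_g_eq_one (n t : ℕ) (h : 2*t ≤ n) :
    ∑ k ∈ range (t+1), (-1:ℤ)^k * ((n-k).choose k) * ((n-2*k).choose (t-k)) = 1 := by
  have e : ∑ k ∈ range (t+1), (-1:ℤ)^k * ((n-k).choose k) * ((n-2*k).choose (t-k))
      = ∑ k ∈ range (t+1), (-1:ℤ)^k * (t.choose k) * ((n-k).choose t) := by
    refine Finset.sum_congr rfl fun k hk => ?_
    rw [mem_range] at hk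
    have h1 : (n-k).choose t * t.choose k = (n-k).choose k * ((n-k)-k).choose (t-k) :=
      Nat.choose_mul (by omega)
    rw [show n - k - k = n - 2*k from by omega] at h1
    have h1' : ((n-k).choose k : ℤ) * ((n-2*k).choose (t-k)) = (t.choose k : ℤ) * ((n-k).choose t) := by
      have := congrArg (Nat.cast : ℕ → ℤ) h1
      push_cast at this
      linarith [this]
    rw [mul_assoc, mul_assoc, h1']
  rw [e]
  exact cheb_sum_choose n t h

lemma cheb_g_eq_one_real (n t : ℕ) (h : 2*t ≤ n) :
    ∑ k ∈ range (t+1), (-1:ℝ)^k * ((n-k).choose k : ℝ) * ((n-2*k).choose (t-k) : ℝ) = 1 := by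
  have h2 := congrArg (Int.cast : ℤ → ℝ) (cheb_g_eq_one n t h)
  push_cast at h2
  exact h2

noncomputable section

/-- `D_{l,t} = C(l,t) - C(l,t-1)` (ballot-type coefficient). -/
def Dco (l t : ℕ) : ℝ := (l.choose t : ℝ) - if t = 0 then 0 else (l.choose (t-1) : ℝ)

/-- The coefficient of `U_j` in the Chebyshev expansion of `x^l`. -/
def Aco (l j : ℕ) : ℝ := if j ≤ l ∧ (l - j) % 2 = 0 then Dco l ((l - j)/2) else 0

end

lemma cheb_Dco (l t : ℕ) (h : 2*t ≤ l) :
    Dco l t = ((l:ℝ) - 2*t + 1) / ((l:ℝ)+1) * ((l+1).choose t : ℝ) := by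
  have hl : ((l:ℝ)+1) ≠ 0 := by positivity
  rw [div_mul_eq_mul_div, eq_div_iff hl]
  cases t with
  | zero => simp [Dco]
  | succ s =>
    have hf1 : ((l+1).choose (s+1) : ℝ) = (l.choose s : ℝ) + (l.choose (s+1) : ℝ) := by
      rw [Nat.choose_succ_succ]
      push_cast
      ring
    have hf2 : (l.choose (s+1) : ℝ) * ((s:ℝ)+1) = (l.choose s : ℝ) * ((l:ℝ) - s) := by
      have h2 := Nat.choose_succ_right_eq l s
      have := congrArg (Nat.cast : ℕ → ℝ) h2
      push_cast at this
      rw [this, Nat.cast_sub (by omega)]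
    simp only [Dco, Nat.succ_ne_zero, if_false, Nat.succ_sub_one]
    push_cast
    linear_combination (-((l:ℝ) - 2*((s:ℝ)+1) + 1)) * hf1 + 2 * hf2

lemma cheb_Aco_even (l k : ℕ) (hk : 2*k ≤ l) (hl : l % 2 = 0) :
    Aco l (2*k) = (2*(k:ℝ)+1) / ((l:ℝ)+1) * ((l+1).choose ((l-2*k)/2) : ℝ) := by
  have hcond : 2*k ≤ l ∧ (l - 2*k) % 2 = 0 := ⟨hk, by omega⟩
  rw [Aco, if_pos hcond]
  set t := (l - 2*k)/2 with htdef
  have ht : 2*t = l - 2*k := by omega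
  rw [cheb_Dco l t (by omega)]
  congr 1
  have hc : 2*(t:ℝ) + 2*(k:ℝ) = (l:ℝ) := by
    have : 2*t + 2*k = l := by omega
    exact_mod_cast congrArg (Nat.cast : ℕ → ℝ) this
  congr 1
  linarith

lemma cheb_Aco_odd (l k : ℕ) (hk : 2*k+1 ≤ l) (hl : l % 2 = 1) :
    Aco l (2*k+1) = (2*(k:ℝ)+2) / ((l:ℝ)+1) * ((l+1).choose ((l-2*k-1)/2) : ℝ) := by
  have hcond : 2*k+1 ≤ l ∧ (l - (2*k+1)) % 2 = 0 := ⟨hk, by omega⟩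
  rw [Aco, if_pos hcond]
  have he : (l - (2*k+1))/2 = (l - 2*k - 1)/2 := by omega
  rw [he]
  set t := (l - 2*k-1)/2 with htdef
  have ht : 2*t = l - 2*k - 1 := by omega
  rw [cheb_Dco l t (by omega)]
  congr 1
  have hc : 2*(t:ℝ) + 2*(k:ℝ) + 1 = (l:ℝ) := by
    have : 2*t + 2*k + 1 = l := by omega
    exact_mod_cast congrArg (Nat.cast : ℕ → ℝ) this
  congr 1
  linarith

lemma sum_even_terms (s : ℕ) (f : ℕ → ℝ) (hf : ∀ j, j % 2 = 1 → f j = 0) :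
    ∑ j ∈ range (2*s+1), f j = ∑ k ∈ range (s+1), f (2*k) := by
  induction s with
  | zero => simp
  | succ s ih =>
    have h1 : ∑ j ∈ range (2*(s+1)+1), f j
        = ∑ j ∈ range (2*s+1), f j + f (2*s+1) + f (2*s+2) := by
      rw [show 2*(s+1)+1 = (2*s+1)+1+1 from by ring, Finset.sum_range_succ, Finset.sum_range_succ]
    rw [h1, ih, hf (2*s+1) (by omega), Finset.sum_range_succ (fun k => f (2*k)) (s+1),
      show 2*(s+1) = 2*s+2 from by ring]
    ring

lemma sum_odd_terms (s : ℕ) (f : ℕ → ℝ) (hf : ∀ j, j % 2 = 0 → f j = 0) :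
    ∑ j ∈ range (2*s+2), f j = ∑ k ∈ range (s+1), f (2*k+1) := by
  induction s with
  | zero =>
    rw [show 2*0+2 = 2 from rfl, Finset.sum_range_succ, Finset.sum_range_succ]
    simp [hf 0 rfl]
  | succ s ih =>
    have h1 : ∑ j ∈ range (2*(s+1)+2), f j
        = ∑ j ∈ range (2*s+2), f j + f (2*s+2) + f (2*s+3) := by
      rw [show 2*(s+1)+2 = (2*s+2)+1+1 from by ring, Finset.sum_range_succ, Finset.sum_range_succ]
    rw [h1, ih, hf (2*s+2) (by omega), Finset.sum_range_succ (fun k => f (2*k+1)) (s+1),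
      show 2*(s+1)+1 = 2*s+3 from by ring]
    ring

lemma Aco_zero {l j : ℕ} (h : ¬(j ≤ l ∧ (l - j) % 2 = 0)) : Aco l j = 0 := by
  rw [Aco, if_neg h]

lemma cheb_CformAux_eq (l m N : ℕ) (hlm : l ≤ m) (hmN : m < N) :
    CformAux l m = ∑ j ∈ range N, Aco l j * Aco m j * γfun j := by
  have hres : ∑ j ∈ range N, Aco l j * Aco m j * γfun j
      = ∑ j ∈ range (l+1), Aco l j * Aco m j * γfun j := by
    refine (Finset.sum_subset ?_ ?_).symm
    · intro x hx
      rw [mem_range] at hx ⊢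
      omega
    · intro j hjN hjl
      rw [mem_range] at hjN hjl
      rw [Aco_zero (l := l) (by omega), zero_mul, zero_mul]
  rw [hres]
  by_cases hpar : (l + m) % 2 = 1
  · rw [CformAux, if_pos hpar]
    refine (Finset.sum_eq_zero fun j hj => ?_).symm
    rw [mem_range] at hj
    by_cases h1 : j ≤ l ∧ (l - j) % 2 = 0
    · rw [Aco_zero (l := m) (by omega), mul_zero, zero_mul]
    · rw [Aco_zero h1, zero_mul, zero_mul]
  · rw [CformAux, if_neg hpar]
    have hl1 : ((l:ℝ)+1) ≠ 0 := by positivity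
    have hm1 : ((m:ℝ)+1) ≠ 0 := by positivity
    by_cases hl2 : l % 2 = 0
    · rw [if_pos hl2]
      have hm2 : m % 2 = 0 := by omega
      have hrange : range (l + 1) = range (2*(l/2) + 1) := by
        rw [show l + 1 = 2*(l/2) + 1 from by omega]
      rw [hrange, sum_even_terms (l/2) _ (fun j hj => by
        rw [Aco_zero (l := l) (by omega), zero_mul, zero_mul])]
      rw [Finset.mul_sum]
      refine Finset.sum_congr rfl fun k hk => ?_
      rw [mem_range] at hk
      have hkl : 2*k ≤ l := by omega
      rw [cheb_Aco_even l k hkl hl2, cheb_Aco_even m k (by omega) hm2]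
      field_simp
    · rw [if_neg hl2]
      have hm2 : m % 2 = 1 := by omega
      have hrange : range (l + 1) = range (2*((l-1)/2) + 2) := by
        rw [show l + 1 = 2*((l-1)/2) + 2 from by omega]
      rw [hrange, sum_odd_terms ((l-1)/2) _ (fun j hj => by
        rw [Aco_zero (l := l) (by omega), zero_mul, zero_mul])]
      rw [Finset.mul_sum]
      refine Finset.sum_congr rfl fun k hk => ?_
      rw [mem_range] at hk
      have hkl : 2*k+1 ≤ l := by omega
      rw [cheb_Aco_odd l k hkl (by omega : l % 2 = 1), cheb_Aco_odd m k (by omega) hm2]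
      · field_simp

lemma cheb_Cform_eq (l m N : ℕ) (hl : l < N) (hm : m < N) :
    Cform l m = ∑ j ∈ range N, Aco l j * Aco m j * γfun j := by
  rw [Cform]
  by_cases h : l ≤ m
  · rw [if_pos h]
    exact cheb_CformAux_eq l m N h hm
  · rw [if_neg h, cheb_CformAux_eq m l N (by omega) hl]
    exact Finset.sum_congr rfl fun j _ => by ring

lemma cheb_S (n j : ℕ) :
    ∑ k ∈ range (n/2+1), (-1:ℝ)^k * ((n-k).choose k : ℝ) * Aco (n-2*k) j
      = if j = n then 1 else 0 := by
  by_cases hcond : j ≤ n ∧ (n - j) % 2 = 0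
  · obtain ⟨hjn, hpar⟩ := hcond
    obtain ⟨t, ht2⟩ : ∃ t, 2*t = n - j := ⟨(n-j)/2, by omega⟩
    have hrestr : ∑ k ∈ range (n/2+1), (-1:ℝ)^k * ((n-k).choose k : ℝ) * Aco (n-2*k) j
        = ∑ k ∈ range (t+1), (-1:ℝ)^k * ((n-k).choose k : ℝ) * Aco (n-2*k) j := by
      refine (Finset.sum_subset ?_ ?_).symm
      · intro x hx
        rw [mem_range] at hx ⊢
        omega
      · intro k hk1 hk2
        rw [mem_range] at hk1 hk2
        rw [Aco_zero (by omega), mul_zero]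
    rw [hrestr]
    have heval : ∀ k ∈ range (t+1), (-1:ℝ)^k * ((n-k).choose k : ℝ) * Aco (n-2*k) j
        = (-1:ℝ)^k * ((n-k).choose k : ℝ) * ((n-2*k).choose (t-k) : ℝ)
          - (-1:ℝ)^k * ((n-k).choose k : ℝ) *
            (if t-k = 0 then 0 else ((n-2*k).choose (t-k-1) : ℝ)) := by
      intro k hk
      rw [mem_range] at hk
      have hc : j ≤ n-2*k ∧ (n-2*k-j) % 2 = 0 := by omega
      have hq : (n-2*k-j)/2 = t - k := by omega
      rw [Aco, if_pos hc, hq, Dco, mul_sub]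
    rw [Finset.sum_congr rfl heval, Finset.sum_sub_distrib,
      cheb_g_eq_one_real n t (by omega)]
    rcases Nat.eq_zero_or_pos t with ht0 | htpos
    · subst ht0
      have hjn' : j = n := by omega
      rw [if_pos hjn']
      norm_num
    · obtain ⟨s, rfl⟩ : ∃ s, t = s + 1 := ⟨t - 1, by omega⟩
      rw [Finset.sum_range_succ]
      have hlast : (if s+1-(s+1) = 0 then (0:ℝ) else ((n-2*(s+1)).choose (s+1-(s+1)-1) : ℝ)) = 0 := by
        norm_num
      rw [hlast, mul_zero, add_zero]
      have hsec : ∑ k ∈ range (s+1), (-1:ℝ)^k * ((n-k).choose k : ℝ) *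
            (if s+1-k = 0 then (0:ℝ) else ((n-2*k).choose (s+1-k-1) : ℝ))
          = ∑ k ∈ range (s+1), (-1:ℝ)^k * ((n-k).choose k : ℝ) * ((n-2*k).choose (s-k) : ℝ) := by
        refine Finset.sum_congr rfl fun k hk => ?_
        rw [mem_range] at hk
        rw [if_neg (by omega), show s+1-k-1 = s-k from by omega]
      rw [hsec, cheb_g_eq_one_real n s (by omega)]
      rw [if_neg (by omega)]
      norm_num
  · rw [if_neg (by omega)]
    refine Finset.sum_eq_zero fun k hk => ?_
    rw [mem_range] at hk
    rw [Aco_zero (by omega), mul_zero]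

lemma polyBil_zero_left (σ : ℝ) (q : Polynomial ℝ) : polyBil σ 0 q = 0 := by
  simp [polyBil]

lemma polyBil_add_left (σ : ℝ) (p p' q : Polynomial ℝ) :
    polyBil σ (p + p') q = polyBil σ p q + polyBil σ p' q := by
  unfold polyBil
  refine Polynomial.sum_add_index p p' _ (fun i => ?_) (fun i a b => ?_)
  · simp [Polynomial.sum_def]
  · simp only [add_mul]
    exact Polynomial.sum_add q _ _

lemma polyBil_sum_left {ι : Type*} (σ : ℝ) (s : Finset ι) (F : ι → Polynomial ℝ)
    (q : Polynomial ℝ) :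
    polyBil σ (∑ i ∈ s, F i) q = ∑ i ∈ s, polyBil σ (F i) q := by
  classical
  induction s using Finset.induction_on with
  | empty => simp [polyBil_zero_left]
  | insert _ _ h ih => rw [Finset.sum_insert h, polyBil_add_left, ih, Finset.sum_insert h]

lemma polyBil_monomial_left (σ : ℝ) (i : ℕ) (a : ℝ) (q : Polynomial ℝ) :
    polyBil σ (Polynomial.monomial i a) q
      = q.sum fun j c => a * c * (Real.sqrt 2 * σ) ^ (i + j) * Cform i j := by
  unfold polyBil
  refine Polynomial.sum_monomial_index a _ ?_
  simp [Polynomial.sum_def]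

lemma polyBil_monomial_monomial (σ : ℝ) (i j : ℕ) (a b : ℝ) :
    polyBil σ (Polynomial.monomial i a) (Polynomial.monomial j b)
      = a * b * (Real.sqrt 2 * σ) ^ (i + j) * Cform i j := by
  rw [polyBil_monomial_left]
  refine Polynomial.sum_monomial_index b _ ?_
  simp

lemma polyBil_sum_right {ι : Type*} (σ : ℝ) (p : Polynomial ℝ) (s : Finset ι)
    (F : ι → Polynomial ℝ) (hp : ∃ i a, p = Polynomial.monomial i a) :
    polyBil σ p (∑ i ∈ s, F i) = ∑ i ∈ s, polyBil σ p (F i) := by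
  classical
  obtain ⟨i, a, rfl⟩ := hp
  induction s using Finset.induction_on with
  | empty =>
    rw [Finset.sum_empty, polyBil_monomial_left]
    simp
  | insert _ _ h ih =>
    rw [Finset.sum_insert h, Finset.sum_insert h, ← ih]
    rw [polyBil_monomial_left, polyBil_monomial_left, polyBil_monomial_left]
    refine Polynomial.sum_add_index _ _ _ (fun j => by simp) (fun j c d => by ring)

end ChebAux

/-- **Lemma 3.5** (Li–Soshnikov). The rescaled Chebyshev polynomials of the second kind are
orthogonal with respect to the bilinear form `⟨x^l, x^m⟩ = (√2σ)^{l+m} C_{l,m}`: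
`⟨U_n^σ, U_m^σ⟩ = δ_{nm} γ_n`. -/
theorem chebyshev_orthogonal_bilinear (σ : ℝ) (hσ : 0 < σ) :
    ∀ n m : ℕ, polyBil σ (chebPoly σ n) (chebPoly σ m) = if n = m then γfun n else 0 := by
  intro n m
  have hw : Real.sqrt 2 * σ ≠ 0 := by positivity
  set N := n + m + 1 with hN
  have hcheb : ∀ r : ℕ, chebPoly σ r = ∑ k ∈ range (r/2+1),
      Polynomial.monomial (r-2*k) ((-1:ℝ)^k * ((r-k).choose k : ℝ)
        * ((Real.sqrt 2 * σ)⁻¹) ^ (r - 2*k)) := by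
    intro r
    unfold chebPoly
    exact Finset.sum_congr rfl fun k _ => Polynomial.C_mul_X_pow_eq_monomial
  have step1 : polyBil σ (chebPoly σ n) (chebPoly σ m)
      = ∑ k ∈ range (n/2+1), ∑ k' ∈ range (m/2+1),
          ((-1:ℝ)^k * ((n-k).choose k : ℝ)) * ((-1:ℝ)^k' * ((m-k').choose k' : ℝ)) *
            Cform (n-2*k) (m-2*k') := by
    rw [hcheb n, hcheb m, polyBil_sum_left]
    refine Finset.sum_congr rfl fun k hk => ?_
    rw [polyBil_sum_right _ _ _ _ ⟨_, _, rfl⟩]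
    refine Finset.sum_congr rfl fun k' hk' => ?_
    rw [mem_range] at hk hk'
    rw [polyBil_monomial_monomial]
    have hpow : ((Real.sqrt 2 * σ)⁻¹) ^ (n - 2*k) * ((Real.sqrt 2 * σ)⁻¹) ^ (m - 2*k')
        * (Real.sqrt 2 * σ) ^ ((n - 2*k) + (m - 2*k')) = 1 := by
      rw [pow_add]
      rw [inv_pow, inv_pow, ← mul_inv, inv_mul_cancel₀ (mul_ne_zero (pow_ne_zero _ hw) (pow_ne_zero _ hw))]
    calc (-1:ℝ)^k * ((n-k).choose k : ℝ) * ((Real.sqrt 2 * σ)⁻¹) ^ (n - 2*k)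
          * ((-1:ℝ)^k' * ((m-k').choose k' : ℝ) * ((Real.sqrt 2 * σ)⁻¹) ^ (m - 2*k'))
          * (Real.sqrt 2 * σ) ^ ((n-2*k) + (m-2*k')) * Cform (n-2*k) (m-2*k')
        = ((-1:ℝ)^k * ((n-k).choose k : ℝ)) * ((-1:ℝ)^k' * ((m-k').choose k' : ℝ)) *
            Cform (n-2*k) (m-2*k') *
            (((Real.sqrt 2 * σ)⁻¹) ^ (n - 2*k) * ((Real.sqrt 2 * σ)⁻¹) ^ (m - 2*k')
              * (Real.sqrt 2 * σ) ^ ((n - 2*k) + (m - 2*k'))) := by ring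
      _ = _ := by rw [hpow, mul_one]
  have step2 : polyBil σ (chebPoly σ n) (chebPoly σ m)
      = ∑ j ∈ range N,
          (∑ k ∈ range (n/2+1), (-1:ℝ)^k * ((n-k).choose k : ℝ) * Aco (n-2*k) j) *
          (∑ k' ∈ range (m/2+1), (-1:ℝ)^k' * ((m-k').choose k' : ℝ) * Aco (m-2*k') j) *
          γfun j := by
    rw [step1]
    have e1 : ∀ k ∈ range (n/2+1), ∀ k' ∈ range (m/2+1),
        ((-1:ℝ)^k * ((n-k).choose k : ℝ)) * ((-1:ℝ)^k' * ((m-k').choose k' : ℝ)) *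
          Cform (n-2*k) (m-2*k')
        = ∑ j ∈ range N, ((-1:ℝ)^k * ((n-k).choose k : ℝ) * Aco (n-2*k) j) *
            ((-1:ℝ)^k' * ((m-k').choose k' : ℝ) * Aco (m-2*k') j) * γfun j := by
      intro k hk k' hk'
      rw [mem_range] at hk hk'
      rw [cheb_Cform_eq (n-2*k) (m-2*k') N (by omega) (by omega), Finset.mul_sum]
      exact Finset.sum_congr rfl fun j _ => by ring
    calc ∑ k ∈ range (n/2+1), ∑ k' ∈ range (m/2+1),
            ((-1:ℝ)^k * ((n-k).choose k : ℝ)) * ((-1:ℝ)^k' * ((m-k').choose k' : ℝ)) *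
              Cform (n-2*k) (m-2*k')
        = ∑ k ∈ range (n/2+1), ∑ k' ∈ range (m/2+1), ∑ j ∈ range N,
            ((-1:ℝ)^k * ((n-k).choose k : ℝ) * Aco (n-2*k) j) *
            ((-1:ℝ)^k' * ((m-k').choose k' : ℝ) * Aco (m-2*k') j) * γfun j := by
          refine Finset.sum_congr rfl fun k hk => Finset.sum_congr rfl fun k' hk' => ?_
          exact e1 k hk k' hk'
      _ = ∑ j ∈ range N, ∑ k ∈ range (n/2+1), ∑ k' ∈ range (m/2+1),
            ((-1:ℝ)^k * ((n-k).choose k : ℝ) * Aco (n-2*k) j) *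
            ((-1:ℝ)^k' * ((m-k').choose k' : ℝ) * Aco (m-2*k') j) * γfun j := by
          rw [Finset.sum_congr rfl (fun k (_ : k ∈ range (n/2+1)) => Finset.sum_comm (s := range (m/2+1)) (t := range N))]
          exact Finset.sum_comm
      _ = _ := by
          refine Finset.sum_congr rfl fun j _ => ?_
          rw [Finset.sum_mul_sum, Finset.sum_mul]
          refine Finset.sum_congr rfl fun k _ => ?_
          rw [Finset.sum_mul]
  rw [step2]
  have e2 : ∀ j ∈ range N,
      (∑ k ∈ range (n/2+1), (-1:ℝ)^k * ((n-k).choose k : ℝ) * Aco (n-2*k) j) *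
      (∑ k' ∈ range (m/2+1), (-1:ℝ)^k' * ((m-k').choose k' : ℝ) * Aco (m-2*k') j) *
      γfun j = if j = n then (if n = m then γfun n else 0) else 0 := by
    intro j _
    rw [cheb_S n j, cheb_S m j]
    by_cases h1 : j = n
    · subst h1
      by_cases h2 : j = m
      · subst h2; simp
      · simp [h2, if_neg h2]
    · simp [h1]
  rw [Finset.sum_congr rfl e2, Finset.sum_ite_eq' (range N) n
    (fun _ => if n = m then γfun n else 0), if_pos (by rw [mem_range]; omega)]
end

section
/- For nonnegative integers n and t with 0 ≤ t ≤ n, define G₁(n,t) = Σ_{k=0}^{n−t} (−1)^k (2n−k)! / (k! (n−k−t)! (n−k+t+1)!) and G₂(n,t) = Σ_{k=0}^{n−t} (−1)^k (2n+1−k)! / (k! (n−k−t)! (n−k+t+2)!). Then G₁(n,t) = 0 and G₂(n,t) = 0 for every t with 0 ≤ t ≤ n−1, while G₁(n,n) = 1/(2n+1) and G₂(n,n) = 1/(2n+2). -/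
open Finset
open scoped BigOperators

open Function
open scoped fwdDiff

open Finset Function
open scoped fwdDiff

lemma fwdDiff_prod_zero (r : ℕ) : ∀ c : ℚ,
    (fwdDiff (1:ℚ))^[r+1] (fun x : ℚ => ∏ j ∈ Finset.range r, (c - x - j)) = 0 := by
  induction r with
  | zero =>
      intro c
      simp only [Finset.range_zero, Finset.prod_empty]
      funext x
      simp [fwdDiff]
  | succ r ih =>
      intro c
      rw [Function.iterate_succ_apply]
      have h1 : Δ_[(1:ℚ)] (fun x : ℚ => ∏ j ∈ Finset.range (r+1), (c - x - j))
          = (-(r+1) : ℚ) • (fun x : ℚ => ∏ j ∈ Finset.range r, ((c-1) - x - j)) := by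
        funext x
        simp only [fwdDiff, Pi.smul_apply, smul_eq_mul]
        rw [Finset.prod_range_succ, Finset.prod_range_succ']
        have e1 : ∀ j, c - (x+1) - (j:ℚ) = (c-1) - x - j := by intro j; ring
        have e2 : ∀ j : ℕ, c - x - ((j:ℕ)+1 : ℕ) = (c-1) - x - j := by
          intro j; push_cast; ring
        have p1 : (∏ j ∈ Finset.range r, (c - (x+1) - (j:ℚ)))
            = ∏ j ∈ Finset.range r, ((c-1) - x - (j:ℚ)) :=
          Finset.prod_congr rfl (fun j _ => e1 j)
        have p2 : (∏ j ∈ Finset.range r, (c - x - ((j+1 : ℕ):ℚ)))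
            = ∏ j ∈ Finset.range r, ((c-1) - x - (j:ℚ)) :=
          Finset.prod_congr rfl (fun j _ => e2 j)
        rw [p1, p2]
        push_cast
        ring
      rw [h1, fwdDiff_iter_const_smul, ih (c-1), smul_zero]


lemma alt_sum_choose_prod (r : ℕ) (c : ℚ) :
    ∑ k ∈ Finset.range (r+1+1), (-1:ℚ)^k * ((r+1).choose k) *
      ∏ j ∈ Finset.range r, (c - k - j) = 0 := by
  have h0 := fwdDiff_iter_eq_sum_shift (1:ℚ)
      (fun x : ℚ => ∏ j ∈ Finset.range r, (c - x - j)) (r+1) 0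
  have hz : (fwdDiff (1:ℚ))^[r+1] (fun x : ℚ => ∏ j ∈ Finset.range r, (c - x - j)) 0 = 0 := by
    rw [fwdDiff_prod_zero r c]; rfl
  rw [hz] at h0
  have h1 : ∀ k ∈ Finset.range (r+1+1),
      (((-1:ℤ)^(r+1-k) * ((r+1).choose k) : ℤ)) •
          (fun x : ℚ => ∏ j ∈ Finset.range r, (c - x - j)) ((0:ℚ) + k • (1:ℚ))
        = (-1:ℚ)^(r+1) * ((-1:ℚ)^k * ((r+1).choose k) *
            ∏ j ∈ Finset.range r, (c - k - j)) := by
    intro k hk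
    have hk' : k ≤ r+1 := Nat.lt_succ_iff.mp (Finset.mem_range.mp hk)
    have h2 : (-1:ℚ)^(r+1-k) * (-1:ℚ)^k = (-1:ℚ)^(r+1) := by
      rw [← pow_add, Nat.sub_add_cancel hk']
    have h3 : (-1:ℚ)^k * (-1:ℚ)^k = 1 := by
      rw [← pow_add]; exact Even.neg_one_pow ⟨k, rfl⟩
    have hs : (-1:ℚ)^(r+1-k) = (-1:ℚ)^(r+1) * (-1:ℚ)^k := by
      calc (-1:ℚ)^(r+1-k) = (-1:ℚ)^(r+1-k) * ((-1:ℚ)^k * (-1:ℚ)^k) := by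
            rw [h3, mul_one]
        _ = ((-1:ℚ)^(r+1-k) * (-1:ℚ)^k) * (-1:ℚ)^k := by ring
        _ = (-1:ℚ)^(r+1) * (-1:ℚ)^k := by rw [h2]
    have hx : (0:ℚ) + k • (1:ℚ) = (k:ℚ) := by simp
    rw [zsmul_eq_mul]
    push_cast
    rw [hs, hx]
    ring
  rw [Finset.sum_congr rfl h1, ← Finset.mul_sum] at h0
  have hne : (-1:ℚ)^(r+1) ≠ 0 := pow_ne_zero _ (by norm_num)
  exact ((mul_eq_zero.mp h0.symm).resolve_left hne)

lemma key_sum (r N : ℕ) (hN : r + (r + 1) ≤ N) :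
    ∑ k ∈ Finset.range (r+1+1), (-1:ℚ)^k * ((N - k).factorial : ℚ) /
      ((k.factorial : ℚ) * ((r+1-k).factorial : ℚ) * ((N - k - r).factorial : ℚ)) = 0 := by
  have hterm : ∀ k ∈ Finset.range (r+1+1),
      (-1:ℚ)^k * ((N - k).factorial : ℚ) /
        ((k.factorial : ℚ) * ((r+1-k).factorial : ℚ) * ((N - k - r).factorial : ℚ))
      = (1 / ((r+1).factorial : ℚ)) * ((-1:ℚ)^k * (((r+1).choose k) : ℚ) *
          ∏ j ∈ Finset.range r, ((N:ℚ) - k - j)) := by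
    intro k hk
    have hk' : k ≤ r+1 := Nat.lt_succ_iff.mp (Finset.mem_range.mp hk)
    have hr : r ≤ N - k := by omega
    have hfac : ((N - k).factorial : ℚ)
        = ((N - k - r).factorial : ℚ) * (((N - k).descFactorial r : ℕ) : ℚ) := by
      rw [← Nat.cast_mul, Nat.factorial_mul_descFactorial hr]
    have hdesc : (((N - k).descFactorial r : ℕ) : ℚ)
        = ∏ j ∈ Finset.range r, ((N:ℚ) - k - j) := by
      rw [Nat.descFactorial_eq_prod_range, Nat.cast_prod]
      refine Finset.prod_congr rfl fun j hj => ?_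
      have hj' := Finset.mem_range.mp hj
      rw [Nat.cast_sub (by omega : j ≤ N - k), Nat.cast_sub (by omega : k ≤ N)]
    rw [hfac, hdesc, Nat.cast_choose ℚ hk']
    have h1 : (k.factorial : ℚ) ≠ 0 := Nat.cast_ne_zero.mpr k.factorial_ne_zero
    have h2 : (((r+1)-k).factorial : ℚ) ≠ 0 := Nat.cast_ne_zero.mpr (Nat.factorial_ne_zero _)
    have h3 : ((N-k-r).factorial : ℚ) ≠ 0 := Nat.cast_ne_zero.mpr (Nat.factorial_ne_zero _)
    have h4 : (((r+1)).factorial : ℚ) ≠ 0 := Nat.cast_ne_zero.mpr (Nat.factorial_ne_zero _)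
    field_simp
  rw [Finset.sum_congr rfl hterm, ← Finset.mul_sum, alt_sum_choose_prod r (N:ℚ), mul_zero]

/-- `G₁(n,t) = Σ_{k=0}^{n-t} (-1)^k (2n-k)! / (k! (n-k-t)! (n-k+t+1)!)`. -/
def Gone (n t : ℕ) : ℚ :=
  ∑ k ∈ Finset.range (n - t + 1),
    (-1 : ℚ) ^ k * (Nat.factorial (2 * n - k) : ℚ) /
      ((Nat.factorial k : ℚ) * (Nat.factorial (n - k - t) : ℚ) *
        (Nat.factorial (n - k + t + 1) : ℚ))

/-- `G₂(n,t) = Σ_{k=0}^{n-t} (-1)^k (2n+1-k)! / (k! (n-k-t)! (n-k+t+2)!)`. -/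
def Gtwo (n t : ℕ) : ℚ :=
  ∑ k ∈ Finset.range (n - t + 1),
    (-1 : ℚ) ^ k * (Nat.factorial (2 * n + 1 - k) : ℚ) /
      ((Nat.factorial k : ℚ) * (Nat.factorial (n - k - t) : ℚ) *
        (Nat.factorial (n - k + t + 2) : ℚ))

/-- The Chu–Vandermonde evaluations (3.44)–(3.47) (Li–Soshnikov): `G₁(n,t) = G₂(n,t) = 0`
for `0 ≤ t ≤ n-1`, while `G₁(n,n) = 1/(2n+1)` and `G₂(n,n) = 1/(2n+2)`. -/
theorem Gone_Gtwo_eval (n : ℕ) :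
    (∀ t : ℕ, t < n → Gone n t = 0 ∧ Gtwo n t = 0) ∧
    Gone n n = 1 / (2 * (n : ℚ) + 1) ∧ Gtwo n n = 1 / (2 * (n : ℚ) + 2) := by
  refine ⟨fun t ht => ?_, ?_, ?_⟩
  · set r := n - t - 1 with hrdef
    have hr : n - t = r + 1 := by omega
    constructor
    · have h := key_sum r (2*n) (by omega)
      rw [Gone, hr, ← h]
      refine Finset.sum_congr rfl fun k hk => ?_
      have hk' : k ≤ r + 1 := Nat.lt_succ_iff.mp (Finset.mem_range.mp hk)
      have e2 : n - k - t = r + 1 - k := by omega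
      have e3 : n - k + t + 1 = 2*n - k - r := by omega
      rw [e2, e3]
    · have h := key_sum r (2*n+1) (by omega)
      rw [Gtwo, hr, ← h]
      refine Finset.sum_congr rfl fun k hk => ?_
      have hk' : k ≤ r + 1 := Nat.lt_succ_iff.mp (Finset.mem_range.mp hk)
      have e2 : n - k - t = r + 1 - k := by omega
      have e3 : n - k + t + 2 = 2*n+1 - k - r := by omega
      rw [e2, e3]
  · rw [Gone, Nat.sub_self, zero_add, Finset.sum_range_one]
    have e1 : 2 * n - 0 = 2 * n := by omega
    have e2 : n - 0 - n = 0 := by omega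
    have e3 : n - 0 + n + 1 = 2 * n + 1 := by omega
    rw [e1, e2, e3, pow_zero, Nat.factorial_zero, Nat.factorial_succ]
    have h4 : ((2*n).factorial : ℚ) ≠ 0 := Nat.cast_ne_zero.mpr (Nat.factorial_ne_zero _)
    have h5 : (2 * (n:ℚ) + 1) ≠ 0 := by positivity
    push_cast
    field_simp
  · rw [Gtwo, Nat.sub_self, zero_add, Finset.sum_range_one]
    have e1 : 2 * n + 1 - 0 = 2 * n + 1 := by omega
    have e2 : n - 0 - n = 0 := by omega
    have e3 : n - 0 + n + 2 = (2 * n + 1) + 1 := by omega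
    rw [e1, e2, e3, pow_zero, Nat.factorial_zero, Nat.factorial_succ (2*n+1)]
    have h4 : ((2*n+1).factorial : ℚ) ≠ 0 := Nat.cast_ne_zero.mpr (Nat.factorial_ne_zero _)
    have h5 : (2 * (n:ℚ) + 2) ≠ 0 := by positivity
    push_cast
    field_simp
    ring
end
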